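/- There exists a function f : ℝ → ℝ such that f is continuous on the closed interval [0,1], f is not constant on [0,1], the set of points a ∈ [0,1] at which f cuts the real axis is uncountable, and f is not absolutely continuous on [0,1]. -/
import Mathlib


/-- `f` cuts the real axis at `a` (within `[0,1]`): `f a = 0` and every open interval
around `a` contains points `b, c` of `[0,1]` with `f b < 0` and `f c > 0`. -/
def CutsAxisAt (f : ℝ → ℝ) (a : ℝ) : Prop :=
  f a = 0 ∧ ∀ u v : ℝ, u < a → a < v →
    (∃ b ∈ Set.Ioo u v ∩ Set.Icc (0:ℝ) 1, f b < 0) ∧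
    (∃ c ∈ Set.Ioo u v ∩ Set.Icc (0:ℝ) 1, f c > 0)

/-- `f` is absolutely continuous on `[a, b]`. -/
def AbsolutelyContinuousOn (f : ℝ → ℝ) (a b : ℝ) : Prop :=
  ∀ ε > (0:ℝ), ∃ δ > (0:ℝ), ∀ n : ℕ, ∀ c d : Fin n → ℝ,
    (∀ i, a ≤ c i ∧ c i < d i ∧ d i ≤ b) →
    (Pairwise fun i j => Disjoint (Set.Ioo (c i) (d i)) (Set.Ioo (c j) (d j))) →
    (∑ i, (d i - c i)) < δ →
    (∑ i, |f (d i) - f (c i)|) < ε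

open Metric Set Finset Real Filter

noncomputable def trm (σ : ℕ → Bool) (n : ℕ) : ℝ := (if σ n then 2 else 0) * (1/3)^(n+1)

lemma trm_nonneg (σ : ℕ → Bool) (n : ℕ) : 0 ≤ trm σ n := by
  unfold trm; split <;> positivity

lemma trm_le (σ : ℕ → Bool) (n : ℕ) : trm σ n ≤ 2 * (1/3)^(n+1) := by
  unfold trm; split
  · exact le_rfl
  · rw [zero_mul]; positivity

lemma summable_geom_aux : Summable (fun n : ℕ => 2 * (1/3:ℝ)^(n+1)) := by
  have h : Summable (fun n : ℕ => (1/3:ℝ)^n) :=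
    summable_geometric_of_lt_one (by norm_num) (by norm_num)
  exact (h.mul_left (2*(1/3))).congr (fun n => by rw [pow_succ]; ring)

lemma summable_trm (σ : ℕ → Bool) : Summable (trm σ) :=
  Summable.of_nonneg_of_le (trm_nonneg σ) (trm_le σ) summable_geom_aux

noncomputable def hC (σ : ℕ → Bool) : ℝ := ∑' n, trm σ n

lemma gtail (N : ℕ) : ∑' (n:ℕ), 2*(1/3:ℝ)^(n+N+1) = (1/3)^N := by
  have h1 : ∀ n : ℕ, 2*(1/3:ℝ)^(n+N+1) = (1/3)^n * (2*(1/3)^(N+1)) := by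
    intro n; rw [pow_add, pow_add]; ring
  rw [tsum_congr h1, tsum_mul_right, tsum_geometric_of_lt_one (by norm_num) (by norm_num)]
  rw [pow_succ]; norm_num; ring

lemma tail_nonneg (σ : ℕ → Bool) (N : ℕ) : 0 ≤ ∑' n, trm σ (n + N) :=
  tsum_nonneg (fun n => trm_nonneg σ _)

lemma summable_trm_add (σ : ℕ → Bool) (N : ℕ) : Summable (fun n => trm σ (n + N)) :=
  (summable_nat_add_iff N).2 (summable_trm σ)

lemma tail_le (σ : ℕ → Bool) (N : ℕ) : ∑' n, trm σ (n + N) ≤ (1/3:ℝ)^N := by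
  have hg : Summable (fun n : ℕ => 2 * (1/3:ℝ)^(n+N+1)) :=
    (summable_nat_add_iff (f := fun n : ℕ => 2 * (1/3:ℝ)^(n+1)) N).2 summable_geom_aux
  calc ∑' n, trm σ (n + N) ≤ ∑' (n:ℕ), 2*(1/3:ℝ)^(n+N+1) :=
        Summable.tsum_le_tsum (fun n => trm_le σ (n+N)) (summable_trm_add σ N) hg
  _ = (1/3:ℝ)^N := gtail N

lemma hC_decomp (σ : ℕ → Bool) (N : ℕ) :
    hC σ = (∑ n ∈ Finset.range N, trm σ n) + ∑' n, trm σ (n + N) :=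
  (Summable.sum_add_tsum_nat_add N (summable_trm σ)).symm

lemma hC_mem (σ : ℕ → Bool) : hC σ ∈ Set.Icc (0:ℝ) 1 := by
  constructor
  · exact tsum_nonneg (trm_nonneg σ)
  · have h0 : hC σ = ∑' n, trm σ (n + 0) := by simpa using hC_decomp σ 0
    calc hC σ = ∑' n, trm σ (n + 0) := h0
    _ ≤ (1/3:ℝ)^0 := tail_le σ 0
    _ = 1 := by norm_num

lemma partial_congr {σ τ : ℕ → Bool} {N : ℕ} (h : ∀ n, n < N → σ n = τ n) :
    ∑ n ∈ Finset.range N, trm σ n = ∑ n ∈ Finset.range N, trm τ n := by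
  refine Finset.sum_congr rfl (fun n hn => ?_)
  unfold trm; rw [h n (Finset.mem_range.1 hn)]

lemma sep' (σ τ : ℕ → Bool) (k : ℕ) (hlt : ∀ n, n < k → σ n = τ n)
    (hσ : σ k = true) (hτ : τ k = false) : (1/3:ℝ)^(k+1) ≤ hC σ - hC τ := by
  have d1 := hC_decomp σ (k+1)
  have d2 := hC_decomp τ (k+1)
  have hp : ∑ n ∈ Finset.range (k+1), trm σ n
      = (∑ n ∈ Finset.range k, trm τ n) + 2*(1/3)^(k+1) := by
    rw [Finset.sum_range_succ, partial_congr hlt]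
    congr 1
    unfold trm; rw [hσ]; norm_num
  have hq : ∑ n ∈ Finset.range (k+1), trm τ n
      = (∑ n ∈ Finset.range k, trm τ n) + 0 := by
    rw [Finset.sum_range_succ]
    congr 1
    unfold trm; rw [hτ]; norm_num
  have t1 : ∑' n, trm σ (n + (k+1)) ≥ 0 := tail_nonneg σ (k+1)
  have t2 : ∑' n, trm τ (n + (k+1)) ≤ (1/3:ℝ)^(k+1) := tail_le τ (k+1)
  rw [d1, d2, hp, hq]
  linarith

lemma sep (σ τ : ℕ → Bool) (k : ℕ) (hlt : ∀ n, n < k → σ n = τ n)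
    (hk : σ k ≠ τ k) : (1/3:ℝ)^(k+1) ≤ |hC σ - hC τ| := by
  cases hσ : σ k <;> cases hτ : τ k
  · rw [hσ, hτ] at hk; exact absurd rfl hk
  · have := sep' τ σ k (fun n hn => (hlt n hn).symm) hτ hσ
    rw [abs_sub_comm]
    exact this.trans (le_abs_self _)
  · exact (sep' σ τ k hlt hσ hτ).trans (le_abs_self _)
  · rw [hσ, hτ] at hk; exact absurd rfl hk

lemma hC_inj : Function.Injective hC := by
  intro σ τ hst
  by_contra hne
  have hex : ∃ n, σ n ≠ τ n := by
    by_contra hq; push_neg at hq; exact hne (funext hq)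
  classical
  set k := Nat.find hex with hk
  have h1 : σ k ≠ τ k := Nat.find_spec hex
  have h2 : ∀ n, n < k → σ n = τ n := by
    intro n hn
    by_contra hne'
    exact absurd (Nat.find_le hne') (not_le.2 hn)
  have := sep σ τ k h2 h1
  rw [hst, sub_self, abs_zero] at this
  have hp : (0:ℝ) < (1/3:ℝ)^(k+1) := by positivity
  linarith

noncomputable def CC : Set ℝ := Set.range hC

lemma CC_nonempty : CC.Nonempty := ⟨hC (fun _ => false), Set.mem_range_self _⟩

lemma CC_sub : CC ⊆ Set.Icc (0:ℝ) 1 := by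
  rintro y ⟨σ, rfl⟩; exact hC_mem σ

lemma le_infDist' {s : Set ℝ} (hs : s.Nonempty) {x b : ℝ}
    (h : ∀ y ∈ s, b ≤ dist x y) : b ≤ Metric.infDist x s := by
  by_contra hb
  push_neg at hb
  rw [Metric.infDist_lt_iff hs] at hb
  obtain ⟨y, hy, hd⟩ := hb
  exact absurd (h y hy) (not_le.2 hd)

lemma third_mem : (1/3:ℝ) ∈ CC := by
  refine ⟨fun n => decide (0 < n), ?_⟩
  have hd := hC_decomp (fun n => decide (0 < n)) 1
  have h1 : ∑ n ∈ Finset.range 1, trm (fun n => decide (0 < n)) n = 0 := by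
    simp [trm]
  have h2 : ∑' (n:ℕ), trm (fun n => decide (0 < n)) (n + 1) = (1/3:ℝ)^1 := by
    rw [← gtail 1]
    refine tsum_congr (fun n => ?_)
    unfold trm; simp
  rw [hd, h1, h2]; norm_num

lemma CC_split : ∀ y ∈ CC, y ≤ 1/3 ∨ 2/3 ≤ y := by
  rintro y ⟨τ, rfl⟩
  have hd := hC_decomp τ 1
  cases h0 : τ 0
  · left
    have h1 : ∑ n ∈ Finset.range 1, trm τ n = 0 := by simp [trm, h0]
    have h2 : ∑' (n:ℕ), trm τ (n + 1) ≤ (1/3:ℝ)^1 := tail_le τ 1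
    rw [hd, h1]; norm_num at h2 ⊢; linarith
  · right
    have h1 : ∑ n ∈ Finset.range 1, trm τ n = 2/3 := by simp [trm, h0]; norm_num
    have h2 : 0 ≤ ∑' (n:ℕ), trm τ (n + 1) := tail_nonneg τ 1
    rw [hd, h1]; linarith

noncomputable def gg (t : ℝ) : ℝ := t * Real.sin t⁻¹

noncomputable def ff (x : ℝ) : ℝ := gg (Metric.infDist x CC)

lemma gg_cont : Continuous gg := by
  rw [continuous_iff_continuousAt]
  intro t
  by_cases ht : t = 0
  · subst ht
    have h0 : gg 0 = 0 := by simp [gg]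
    rw [ContinuousAt, h0]
    have hb : ∀ s : ℝ, ‖gg s‖ ≤ |s| := by
      intro s
      show |gg s| ≤ |s|
      unfold gg
      rw [abs_mul]
      calc |s| * |Real.sin s⁻¹| ≤ |s| * 1 :=
            mul_le_mul_of_nonneg_left (Real.abs_sin_le_one _) (abs_nonneg s)
      _ = |s| := mul_one _
    have ht : Filter.Tendsto (fun s : ℝ => |s|) (nhds 0) (nhds 0) := by
      simpa using (continuous_abs.tendsto (0:ℝ))
    exact squeeze_zero_norm hb ht
  · exact (continuousAt_id.mul ((Real.continuous_sin.continuousAt).comp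
      (continuousAt_id.inv₀ ht)))

lemma ff_cont : Continuous ff := gg_cont.comp (Metric.continuous_infDist_pt CC)

lemma ff_zero {a : ℝ} (ha : a ∈ CC) : ff a = 0 := by
  unfold ff
  rw [Metric.infDist_zero_of_mem ha]
  simp [gg]

lemma exists_pts {η : ℝ} (hη : 0 < η) : ∃ tp tn : ℝ, 0 < tp ∧ tp < η ∧ 0 < tn ∧ tn < η ∧
    Real.sin tp⁻¹ = 1 ∧ Real.sin tn⁻¹ = -1 := by
  obtain ⟨k, hk⟩ := exists_nat_gt η⁻¹
  have hπ := Real.pi_gt_three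
  have hηi : 0 < η⁻¹ := inv_pos.2 hη
  have hk6 : (k:ℝ) ≥ 0 := Nat.cast_nonneg k
  have hdp : η⁻¹ < Real.pi/2 + k*(2*Real.pi) := by nlinarith
  have hdn : η⁻¹ < (Real.pi/2 + Real.pi) + k*(2*Real.pi) := by nlinarith
  have hdp0 : 0 < Real.pi/2 + k*(2*Real.pi) := lt_trans hηi hdp
  have hdn0 : 0 < (Real.pi/2 + Real.pi) + k*(2*Real.pi) := lt_trans hηi hdn
  refine ⟨(Real.pi/2 + k*(2*Real.pi))⁻¹, ((Real.pi/2 + Real.pi) + k*(2*Real.pi))⁻¹,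
    inv_pos.2 hdp0, ?_, inv_pos.2 hdn0, ?_, ?_, ?_⟩
  · rw [← inv_inv η]
    exact inv_strictAnti₀ hηi hdp
  · rw [← inv_inv η]
    exact inv_strictAnti₀ hηi hdn
  · rw [inv_inv, Real.sin_add_nat_mul_two_pi, Real.sin_pi_div_two]
  · rw [inv_inv, Real.sin_add_nat_mul_two_pi, Real.sin_add_pi, Real.sin_pi_div_two]

lemma cuts (σ : ℕ → Bool) : CutsAxisAt ff (hC σ) := by
  classical
  obtain ⟨a, ha⟩ : ∃ a : ℝ, a = hC σ := ⟨_, rfl⟩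
  rw [← ha]
  refine ⟨ff_zero ⟨σ, ha.symm⟩, ?_⟩
  intro u v hu hv
  obtain ⟨N, hN⟩ := exists_pow_lt_of_lt_one (x := min (a-u) (v-a)) (y := (1/3:ℝ))
      (lt_min (by linarith) (by linarith)) (by norm_num)
  rw [lt_min_iff] at hN
  obtain ⟨hN1, hN2⟩ := hN
  obtain ⟨q, hq⟩ : ∃ q : ℝ, q = (1/3:ℝ)^(N+1) := ⟨_, rfl⟩
  have hq0 : 0 < q := by rw [hq]; positivity
  have hq3 : (1/3:ℝ)^N = 3*q := by rw [hq, pow_succ]; ring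
  obtain ⟨P, hP⟩ : ∃ P : ℝ, P = ∑ n ∈ Finset.range N, trm σ n := ⟨_, rfl⟩
  obtain ⟨ρ, hρlt, hρge⟩ : ∃ ρ : ℕ → Bool, (∀ n, n < N → ρ n = σ n) ∧
      (∀ n, ¬ (n < N) → ρ n = false) := by
    refine ⟨fun n => σ n && decide (n < N), fun n hn => by simp [hn], fun n hn => by simp [hn]⟩
  have hCρ : hC ρ = P := by
    rw [hC_decomp ρ N, hP]
    have h1 : ∑ n ∈ Finset.range N, trm ρ n = ∑ n ∈ Finset.range N, trm σ n :=
      partial_congr hρlt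
    have h2 : ∀ n : ℕ, trm ρ (n + N) = 0 := by
      intro n; unfold trm; rw [hρge _ (by omega)]; norm_num
    rw [h1, tsum_congr h2, tsum_zero, add_zero]
  obtain ⟨x, hx⟩ : ∃ x : ℝ, x = P + (3/2)*q := ⟨_, rfl⟩
  obtain ⟨T, hT⟩ : ∃ T : ℝ, T = ∑' n, trm σ (n + N) := ⟨_, rfl⟩
  have hdσ : a = P + T := by rw [ha, hC_decomp σ N, hP, hT]
  have hT0 : 0 ≤ T := by rw [hT]; exact tail_nonneg σ N
  have hT1 : T ≤ 3*q := by rw [hT, ← hq3]; exact tail_le σ N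
  have hax : |a - x| ≤ 3*q := by
    rw [hdσ, hx, abs_le]; constructor <;> nlinarith
  have hP0 : 0 ≤ P := by
    rw [hP]; exact Finset.sum_nonneg (fun n _ => trm_nonneg σ n)
  have hx0 : 0 ≤ x := by nlinarith
  have hx1 : x ≤ 1 := by
    obtain ⟨ρ1, hρ1lt, hρ1ge⟩ : ∃ ρ1 : ℕ → Bool, (∀ n, n < N → ρ1 n = σ n) ∧
        (∀ n, ¬ (n < N) → ρ1 n = true) := by
      refine ⟨fun n => σ n || !decide (n < N), fun n hn => by simp [hn], fun n hn => by simp [hn]⟩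
    have e1 : hC ρ1 = P + 3*q := by
      rw [hC_decomp ρ1 N, hP]
      have h1 : ∑ n ∈ Finset.range N, trm ρ1 n = ∑ n ∈ Finset.range N, trm σ n :=
        partial_congr hρ1lt
      have h2 : ∀ n : ℕ, trm ρ1 (n + N) = 2*(1/3:ℝ)^(n+N+1) := by
        intro n; unfold trm; rw [hρ1ge _ (by omega)]; norm_num
      rw [h1, tsum_congr h2, gtail N, hq3]
    have h1 := (CC_sub ⟨ρ1, rfl⟩).2
    rw [e1] at h1
    nlinarith
  -- lower bound for infDist x CC
  have hdx : (1/2)*q ≤ Metric.infDist x CC := by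
    refine le_infDist' CC_nonempty ?_
    rintro y ⟨τ, rfl⟩
    rw [Real.dist_eq]
    by_cases hcase : ∀ n, n < N → τ n = σ n
    · have hdτ : hC τ = P + trm τ N + ∑' n, trm τ (n + (N+1)) := by
        rw [hC_decomp τ (N+1), Finset.sum_range_succ, partial_congr hcase, hP]
      have ht0 : 0 ≤ ∑' n, trm τ (n + (N+1)) := tail_nonneg τ (N+1)
      have ht1 : ∑' n, trm τ (n + (N+1)) ≤ q := by rw [hq]; exact tail_le τ (N+1)
      cases hτN : τ N
      · have htm : trm τ N = 0 := by unfold trm; rw [hτN]; norm_num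
        calc (1/2)*q ≤ x - hC τ := by rw [hdτ, htm, hx]; linarith
        _ ≤ |x - hC τ| := le_abs_self _
      · have htm : trm τ N = 2*q := by unfold trm; rw [hτN, hq]; norm_num
        calc (1/2)*q ≤ -(x - hC τ) := by rw [hdτ, htm, hx]; linarith
        _ ≤ |x - hC τ| := neg_le_abs _
    · push_neg at hcase
      obtain ⟨n0, hn0N, hn0⟩ := hcase
      have hex : ∃ n, τ n ≠ ρ n := by
        refine ⟨n0, ?_⟩
        rw [hρlt n0 hn0N]
        exact hn0
      obtain ⟨k, hkspec, hkmin⟩ : ∃ k, τ k ≠ ρ k ∧ ∀ n, n < k → τ n = ρ n := by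
        refine ⟨Nat.find hex, Nat.find_spec hex, fun n hn => ?_⟩
        by_contra hne'
        exact absurd (Nat.find_le hne') (not_le.2 hn)
      have hkN : k < N := by
        by_contra hge
        exact hn0 ((hkmin n0 (lt_of_lt_of_le hn0N (not_lt.1 hge))).trans (hρlt n0 hn0N))
      have hsep := sep τ ρ k hkmin hkspec
      have hpow : (1/3:ℝ)^N ≤ (1/3:ℝ)^(k+1) :=
        pow_le_pow_of_le_one (by norm_num) (by norm_num) (by omega)
      have h3q : 3*q ≤ |hC τ - hC ρ| := by
        rw [← hq3]; exact le_trans hpow hsep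
      have htri : |hC τ - hC ρ| ≤ |hC τ - x| + |x - hC ρ| := abs_sub_le _ _ _
      have hxP : |x - hC ρ| = (3/2)*q := by
        rw [hCρ, hx]
        rw [show P + 3/2*q - P = (3/2)*q by ring]
        exact abs_of_pos (by linarith)
      calc (1/2)*q ≤ |hC τ - x| := by linarith
      _ = |x - hC τ| := abs_sub_comm _ _
  -- IVT setup
  have hda : Metric.infDist a CC = 0 := Metric.infDist_zero_of_mem ⟨σ, ha.symm⟩
  have hsub : Set.Icc (0:ℝ) (Metric.infDist x CC) ⊆
      (fun z => Metric.infDist z CC) '' Set.Icc (min a x) (max a x) := by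
    rcases le_total a x with h | h
    · rw [min_eq_left h, max_eq_right h]
      have := intermediate_value_Icc h ((Metric.continuous_infDist_pt CC).continuousOn)
      rwa [hda] at this
    · rw [min_eq_right h, max_eq_left h]
      have := intermediate_value_Icc' h ((Metric.continuous_infDist_pt CC).continuousOn)
      rwa [hda] at this
  have haIcc := hC_mem σ
  rw [← ha] at haIcc
  have habs := abs_le.1 hax
  have hwin : Set.Icc (min a x) (max a x) ⊆ Set.Ioo u v ∩ Set.Icc 0 1 := by
    intro z hz
    have h1 : a - 3*q ≤ min a x := le_min (by linarith) (by linarith [habs.1, habs.2])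
    have h2 : max a x ≤ a + 3*q := max_le (by linarith) (by linarith [habs.1, habs.2])
    have h3 : 0 ≤ min a x := le_min haIcc.1 hx0
    have h4 : max a x ≤ 1 := max_le haIcc.2 hx1
    rw [hq3] at hN1 hN2
    exact ⟨⟨by linarith [hz.1], by linarith [hz.2]⟩, ⟨by linarith [hz.1], by linarith [hz.2]⟩⟩
  obtain ⟨tp, tn, htp0, htpη, htn0, htnη, hsp, hsn⟩ :=
    exists_pts (show (0:ℝ) < (1/2)*q by positivity)
  constructor
  · obtain ⟨b, hb, hdb⟩ := hsub ⟨le_of_lt htn0, by linarith⟩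
    refine ⟨b, hwin hb, ?_⟩
    show gg (Metric.infDist b CC) < 0
    simp only at hdb
    rw [hdb]
    unfold gg; rw [hsn]; nlinarith
  · obtain ⟨c, hc, hdc⟩ := hsub ⟨le_of_lt htp0, by linarith⟩
    refine ⟨c, hwin hc, ?_⟩
    show gg (Metric.infDist c CC) > 0
    simp only at hdc
    rw [hdc]
    unfold gg; rw [hsp]; nlinarith

lemma not_countable_fun : ¬ Countable (ℕ → Bool) := by
  intro hc
  classical
  obtain ⟨f, hf⟩ := Countable.exists_injective_nat (ℕ → Bool)
  have he : Function.Injective (fun (s : Set ℕ) (n : ℕ) => decide (n ∈ s)) := by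
    intro s t hst
    ext n
    have := congrFun hst n
    simp only [decide_eq_decide] at this
    exact this
  exact Function.cantor_injective _ (hf.comp he)

lemma cut_uncountable : ¬ (Set.Countable {a ∈ Set.Icc (0:ℝ) 1 | CutsAxisAt ff a}) := by
  intro hcut
  have hsub : CC ⊆ {a ∈ Set.Icc (0:ℝ) 1 | CutsAxisAt ff a} := by
    rintro y ⟨σ, rfl⟩
    exact ⟨hC_mem σ, cuts σ⟩
  have hCCc : CC.Countable := hcut.mono hsub
  have : (hC ⁻¹' CC).Countable := hCCc.preimage hC_inj
  rw [show hC ⁻¹' CC = Set.univ by ext σ; simp [CC]] at this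
  exact not_countable_fun (Set.countable_univ_iff.1 this)

lemma infDist_gap {s : ℝ} (h1 : 0 < s) (h2 : s ≤ 1/6) :
    Metric.infDist (1/3 + s) CC = s := by
  refine le_antisymm ?_ ?_
  · have := Metric.infDist_le_dist_of_mem (x := 1/3 + s) third_mem
    rwa [Real.dist_eq, show 1/3 + s - 1/3 = s by ring, abs_of_pos h1] at this
  · refine le_infDist' CC_nonempty (fun y hy => ?_)
    rw [Real.dist_eq]
    rcases CC_split y hy with h | h
    · calc s ≤ 1/3 + s - y := by linarith
      _ ≤ |1/3 + s - y| := le_abs_self _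
    · calc s ≤ -(1/3 + s - y) := by linarith
      _ ≤ |1/3 + s - y| := neg_le_abs _

lemma ff_gap {s : ℝ} (h1 : 0 < s) (h2 : s ≤ 1/6) : ff (1/3 + s) = s * Real.sin s⁻¹ := by
  unfold ff gg
  rw [infDist_gap h1 h2]

lemma not_ac : ¬ AbsolutelyContinuousOn ff 0 1 := by
  intro hac
  obtain ⟨δ, hδ0, H⟩ := hac 1 one_pos
  obtain ⟨t, ht⟩ : ∃ t : ℕ → ℝ, t = fun k : ℕ => (Real.pi/2 + (k:ℝ)*Real.pi)⁻¹ := ⟨_, rfl⟩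
  have hπ := Real.pi_gt_three
  have hπ4 := Real.pi_le_four
  have hden : ∀ k : ℕ, (k:ℝ) < Real.pi/2 + k*Real.pi ∧ 0 < Real.pi/2 + k*Real.pi := by
    intro k
    have h0 : (0:ℝ) ≤ k := Nat.cast_nonneg k
    constructor <;> nlinarith
  have htpos : ∀ k, 0 < t k := by intro k; rw [ht]; exact inv_pos.2 (hden k).2
  have hanti : ∀ j k, j < k → t k < t j := by
    intro j k hjk
    rw [ht]
    have hc : (j:ℝ) < k := Nat.cast_lt.2 hjk
    exact inv_strictAnti₀ (hden j).2 (by nlinarith)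
  have hanti' : ∀ j k, j ≤ k → t k ≤ t j := by
    intro j k hjk
    rcases eq_or_lt_of_le hjk with rfl | h
    · exact le_rfl
    · exact (hanti _ _ h).le
  have hinv : ∀ k : ℕ, (t k)⁻¹ = Real.pi/2 + k*Real.pi := by
    intro k; rw [ht]; exact inv_inv _
  have hle6 : ∀ k, 2 ≤ k → t k ≤ 1/6 := by
    intro k hk
    have hc : (2:ℝ) ≤ k := by exact_mod_cast hk
    have h6 : (6:ℝ) ≤ Real.pi/2 + k*Real.pi := by nlinarith
    rw [ht, show (1/6:ℝ) = 6⁻¹ by norm_num]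
    exact inv_anti₀ (by norm_num) h6
  have hval : ∀ k, 2 ≤ k → ff (1/3 + t k) = (-1)^k * t k := by
    intro k hk
    rw [ff_gap (htpos k) (hle6 k hk), hinv k, Real.sin_add_nat_mul_pi,
      Real.sin_pi_div_two, mul_one, mul_comm]
  obtain ⟨M, hM⟩ := exists_nat_gt δ⁻¹
  obtain ⟨m, hm⟩ : ∃ m : ℕ, m = M + 2 := ⟨_, rfl⟩
  have hm2 : 2 ≤ m := by omega
  have htmδ : t m < δ := by
    have hMm : (M:ℝ) ≤ m := by exact_mod_cast (by omega : M ≤ m)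
    have h1 : δ⁻¹ < Real.pi/2 + m*Real.pi := lt_of_lt_of_le hM (le_trans hMm (hden m).1.le)
    calc t m < (δ⁻¹)⁻¹ := by rw [ht]; exact inv_strictAnti₀ (inv_pos.2 hδ0) h1
    _ = δ := inv_inv δ
  obtain ⟨L, hL⟩ := (Real.tendsto_sum_range_one_div_nat_succ_atTop.eventually_ge_atTop
      ((∑ i ∈ Finset.range m, 1/((i:ℝ)+1)) + 4)).exists
  have hsum4 : (4:ℝ) ≤ ∑ i ∈ Finset.range L, 1/((m:ℝ)+i+1) := by
    have hsplit := Finset.sum_range_add (fun i : ℕ => 1/((i:ℝ)+1)) m L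
    have hmono : ∑ i ∈ Finset.range L, 1/((i:ℝ)+1) ≤ ∑ i ∈ Finset.range (m+L), 1/((i:ℝ)+1) :=
      Finset.sum_le_sum_of_subset_of_nonneg (Finset.range_subset_range.2 (by omega))
        (fun i _ _ => by positivity)
    have hcast : ∑ i ∈ Finset.range L, 1/((((m+i : ℕ)) : ℝ)+1)
        = ∑ i ∈ Finset.range L, 1/((m:ℝ)+i+1) := by
      refine Finset.sum_congr rfl (fun i _ => ?_)
      push_cast; ring
    rw [hsplit, hcast] at hmono
    linarith
  set cf : Fin L → ℝ := fun i => 1/3 + t (m+2*(i:ℕ)+1) with hcf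
  set df : Fin L → ℝ := fun i => 1/3 + t (m+2*(i:ℕ)) with hdf
  have hbounds : ∀ i : Fin L, 0 ≤ cf i ∧ cf i < df i ∧ df i ≤ 1 := by
    intro i
    refine ⟨by have := htpos (m+2*(i:ℕ)+1); rw [hcf]; norm_num; linarith, ?_, ?_⟩
    · rw [hcf, hdf]
      have := hanti (m+2*(i:ℕ)) (m+2*(i:ℕ)+1) (by omega)
      linarith
    · rw [hdf]
      have h1 : t (m+2*(i:ℕ)) ≤ t m := hanti' m _ (by omega)
      have h2 := hle6 m hm2
      simp only
      linarith
  have hdisj : Pairwise fun i j : Fin L => Disjoint (Set.Ioo (cf i) (df i)) (Set.Ioo (cf j) (df j)) := by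
    have key : ∀ i j : Fin L, (i:ℕ) < (j:ℕ) →
        Disjoint (Set.Ioo (cf i) (df i)) (Set.Ioo (cf j) (df j)) := by
      intro i j hij
      rw [Set.disjoint_left]
      intro z hzi hzj
      have hji : df j ≤ cf i := by
        rw [hcf, hdf]
        have := hanti' (m+2*(i:ℕ)+1) (m+2*(j:ℕ)) (by omega)
        simp only
        linarith
      exact absurd hzi.1 (not_lt.2 (le_trans hzj.2.le hji))
    intro i j hij
    rcases Nat.lt_or_ge (i:ℕ) (j:ℕ) with h | h
    · exact key i j h
    · have hne : (j:ℕ) ≠ (i:ℕ) := fun e => hij (Fin.ext e.symm)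
      exact (key j i (lt_of_le_of_ne h hne)).symm
  have hlensum : (∑ i, (df i - cf i)) < δ := by
    have he : ∀ i : Fin L, df i - cf i = t (m+2*(i:ℕ)) - t (m+2*(i:ℕ)+1) := by
      intro i; rw [hcf, hdf]; ring
    rw [Finset.sum_congr rfl (fun i _ => he i)]
    have hr : ∑ i : Fin L, (t (m+2*(i:ℕ)) - t (m+2*(i:ℕ)+1))
        = ∑ i ∈ Finset.range L, (t (m+2*i) - t (m+2*i+1)) :=
      Fin.sum_univ_eq_sum_range (fun i => t (m+2*i) - t (m+2*i+1)) L
    rw [hr]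
    have hterm : ∀ i ∈ Finset.range L, t (m+2*i) - t (m+2*i+1)
        ≤ t (m+2*i) - t (m+2*(i+1)) := by
      intro i _
      have := hanti' (m+2*i+1) (m+2*(i+1)) (by omega)
      linarith
    calc ∑ i ∈ Finset.range L, (t (m+2*i) - t (m+2*i+1))
        ≤ ∑ i ∈ Finset.range L, (t (m+2*i) - t (m+2*(i+1))) := Finset.sum_le_sum hterm
    _ = t (m+2*0) - t (m+2*L) := Finset.sum_range_sub' (fun i => t (m+2*i)) L
    _ ≤ t m := by
        have := htpos (m+2*L)
        norm_num
        linarith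
    _ < δ := htmδ
  have habs : ∀ i : Fin L, (1/4) * (1/((m:ℝ)+i+1)) ≤ |ff (df i) - ff (cf i)| := by
    intro i
    have hv1 : ff (df i) = (-1)^(m+2*(i:ℕ)) * t (m+2*(i:ℕ)) := by
      rw [hdf]; exact hval _ (by omega)
    have hv2 : ff (cf i) = (-1)^(m+2*(i:ℕ)+1) * t (m+2*(i:ℕ)+1) := by
      rw [hcf]; exact hval _ (by omega)
    have hdiff : ff (df i) - ff (cf i)
        = (-1)^(m+2*(i:ℕ)) * (t (m+2*(i:ℕ)) + t (m+2*(i:ℕ)+1)) := by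
      rw [hv1, hv2, pow_succ]; ring
    rw [hdiff, abs_mul, abs_pow, abs_neg, abs_one, one_pow, one_mul]
    have ht1 : t (m+2*(i:ℕ)+1) ≤ t (m+2*(i:ℕ)) := hanti' _ _ (by omega)
    have hlow : (8*((m:ℝ)+i+1))⁻¹ ≤ t (m+2*(i:ℕ)+1) := by
      rw [ht]
      have hi0 : (0:ℝ) ≤ (i:ℕ) := Nat.cast_nonneg _
      have hm0 : (0:ℝ) ≤ m := Nat.cast_nonneg _
      have hcast : ((m+2*(i:ℕ)+1 : ℕ):ℝ) = (m:ℝ)+2*i+1 := by push_cast; ring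
      have hub : Real.pi/2 + ((m+2*(i:ℕ)+1 : ℕ):ℝ)*Real.pi ≤ 8*((m:ℝ)+i+1) := by
        rw [hcast]; nlinarith
      exact inv_anti₀ (hden _).2 hub
    have hpos : 0 < (8*((m:ℝ)+i+1)) := by positivity
    have habs' : |t (m+2*(i:ℕ)) + t (m+2*(i:ℕ)+1)| = t (m+2*(i:ℕ)) + t (m+2*(i:ℕ)+1) :=
      abs_of_pos (by linarith [htpos (m+2*(i:ℕ)), htpos (m+2*(i:ℕ)+1)])
    rw [habs']
    have h14 : (1/4) * (1/((m:ℝ)+i+1)) = 2 * (8*((m:ℝ)+i+1))⁻¹ := by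
      field_simp; ring
    rw [h14]
    linarith
  have hsumlow : (1:ℝ) ≤ ∑ i, |ff (df i) - ff (cf i)| := by
    have h1 : ∑ i : Fin L, (1/4) * (1/((m:ℝ)+i+1)) ≤ ∑ i, |ff (df i) - ff (cf i)| :=
      Finset.sum_le_sum (fun i _ => habs i)
    have h2 : ∑ i : Fin L, (1/4) * (1/((m:ℝ)+i+1))
        = (1/4) * ∑ i ∈ Finset.range L, 1/((m:ℝ)+i+1) := by
      rw [← Finset.mul_sum]
      congr 1
      exact Fin.sum_univ_eq_sum_range (fun i => 1/((m:ℝ)+i+1)) L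
    rw [h2] at h1
    linarith
  have := H L cf df hbounds hdisj hlensum
  linarith
theorem stmt_0 :
    ∃ f : ℝ → ℝ,
      ContinuousOn f (Set.Icc 0 1) ∧
      (∃ x ∈ Set.Icc (0:ℝ) 1, ∃ y ∈ Set.Icc (0:ℝ) 1, f x ≠ f y) ∧
      ¬ (Set.Countable {a ∈ Set.Icc (0:ℝ) 1 | CutsAxisAt f a}) ∧
      ¬ AbsolutelyContinuousOn f 0 1 := by
  refine ⟨ff, ff_cont.continuousOn, ?_, cut_uncountable, not_ac⟩
  obtain ⟨hz, hcut⟩ := cuts (fun _ => false)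
  have ha := hC_mem (fun _ => false)
  obtain ⟨_, ⟨c, ⟨_, hcicc⟩, hcpos⟩⟩ :=
    hcut (hC (fun _ => false) - 1) (hC (fun _ => false) + 1) (by linarith) (by linarith)
  exact ⟨c, hcicc, hC (fun _ => false), ha, by rw [hz]; exact ne_of_gt hcpos⟩
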